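/- There exist eight pairwise distinct points A, B, C, D, E, F, G, H in ℝ² such that the perfect matching M₁ = {(A,B), (C,D), (E,F), (G,H)} is 3-local maximum (every three of its edges form a maximum-length perfect matching on their 6 endpoints) and yet the perfect matching M₂ = {(A,H), (B,C), (D,E), (F,G)} satisfies w(M₁) < 0.98 · w(M₂), where w denotes total edge length. In particular, μ₃ < 0.98: a 3-local maximum matching need not approximate a global maximum matching within ratio 0.98. -/

import Mathlib

open Finset

noncomputable section

/-- The Euclidean plane. -/
abbrev Pt : Type := EuclideanSpace ℝ (Fin 2)

/-- The set of endpoints of the matching with edges `(a i, b i)`. -/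
def endpts {n : ℕ} (a b : Fin n → Pt) : Finset Pt :=
  letI := Classical.decEq Pt
  (Finset.univ.image a) ∪ (Finset.univ.image b)

/-- `σ` is a perfect matching on the finite point set `S`:
a fixed-point-free involution of `S`. -/
def IsFpfInvolOn (S : Finset Pt) (σ : Pt → Pt) : Prop :=
  (∀ x ∈ S, σ x ∈ S) ∧ (∀ x ∈ S, σ (σ x) = x) ∧ (∀ x ∈ S, σ x ≠ x)

/-- The matching with edges `(a i, b i)` is `k`-local maximum: any `k` of its edges
form a maximum-length perfect matching on their `2k` endpoints. -/
def IsKLocalMax (k : ℕ) {n : ℕ} (a b : Fin n → Pt) : Prop :=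
  ∀ s : Fin k → Fin n, Function.Injective s →
    ∀ σ : Pt → Pt, IsFpfInvolOn (endpts (a ∘ s) (b ∘ s)) σ →
      (1/2) * ∑ x ∈ endpts (a ∘ s) (b ∘ s), dist x (σ x) ≤ ∑ j, dist (a (s j)) (b (s j))


local instance : DecidableEq Pt := Classical.decEq Pt

lemma dist_le_of (x y : Pt) (u : ℝ) (hu : 0 ≤ u)
    (h : (x 0 - y 0)^2 + (x 1 - y 1)^2 ≤ u^2) : dist x y ≤ u := by
  rw [EuclideanSpace.dist_eq, Fin.sum_univ_two]
  simp only [Real.dist_eq, sq_abs]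
  calc Real.sqrt ((x 0 - y 0)^2 + (x 1 - y 1)^2) ≤ Real.sqrt (u^2) := Real.sqrt_le_sqrt h
  _ = u := Real.sqrt_sq hu

lemma le_dist_of (x y : Pt) (l : ℝ) (hl : 0 ≤ l)
    (h : l^2 ≤ (x 0 - y 0)^2 + (x 1 - y 1)^2) : l ≤ dist x y := by
  rw [EuclideanSpace.dist_eq, Fin.sum_univ_two]
  simp only [Real.dist_eq, sq_abs]
  calc l = Real.sqrt (l^2) := (Real.sqrt_sq hl).symm
  _ ≤ _ := Real.sqrt_le_sqrt h

lemma ne_of_dist_lb {x y : Pt} {l : ℝ} (hl : 0 < l) (hd : l ≤ dist x y) : x ≠ y := by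
  intro h
  rw [h, dist_self] at hd
  linarith

lemma endpts3 (a b : Fin 3 → Pt) :
    endpts a b = {a 0, a 1, a 2, b 0, b 1, b 2} := by
  have huniv : (Finset.univ : Finset (Fin 3)) = {0, 1, 2} := rfl
  simp only [endpts, huniv, Finset.image_insert, Finset.image_singleton,
    Finset.insert_union]
  rfl

lemma fin4cases (x : Fin 4) : x = 0 ∨ x = 1 ∨ x = 2 ∨ x = 3 := by
  fin_cases x <;> simp

lemma matching6 (x1 x2 x3 x4 x5 x6 : Pt) (W : ℝ)
    (n12 : x1 ≠ x2) (n13 : x1 ≠ x3) (n14 : x1 ≠ x4) (n15 : x1 ≠ x5) (n16 : x1 ≠ x6) (n23 : x2 ≠ x3) (n24 : x2 ≠ x4) (n25 : x2 ≠ x5) (n26 : x2 ≠ x6) (n34 : x3 ≠ x4) (n35 : x3 ≠ x5) (n36 : x3 ≠ x6) (n45 : x4 ≠ x5) (n46 : x4 ≠ x6) (n56 : x5 ≠ x6)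
    (h1 : dist x1 x2 + dist x3 x4 + dist x5 x6 ≤ W) (h2 : dist x1 x2 + dist x3 x5 + dist x4 x6 ≤ W) (h3 : dist x1 x2 + dist x3 x6 + dist x4 x5 ≤ W) (h4 : dist x1 x3 + dist x2 x4 + dist x5 x6 ≤ W) (h5 : dist x1 x3 + dist x2 x5 + dist x4 x6 ≤ W) (h6 : dist x1 x3 + dist x2 x6 + dist x4 x5 ≤ W) (h7 : dist x1 x4 + dist x2 x3 + dist x5 x6 ≤ W) (h8 : dist x1 x4 + dist x2 x5 + dist x3 x6 ≤ W) (h9 : dist x1 x4 + dist x2 x6 + dist x3 x5 ≤ W) (h10 : dist x1 x5 + dist x2 x3 + dist x4 x6 ≤ W) (h11 : dist x1 x5 + dist x2 x4 + dist x3 x6 ≤ W) (h12 : dist x1 x5 + dist x2 x6 + dist x3 x4 ≤ W) (h13 : dist x1 x6 + dist x2 x3 + dist x4 x5 ≤ W) (h14 : dist x1 x6 + dist x2 x4 + dist x3 x5 ≤ W) (h15 : dist x1 x6 + dist x2 x5 + dist x3 x4 ≤ W)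
    (σ : Pt → Pt) (hσ : IsFpfInvolOn {x1, x2, x3, x4, x5, x6} σ) :
    (1/2) * ∑ x ∈ ({x1, x2, x3, x4, x5, x6} : Finset Pt), dist x (σ x) ≤ W := by
  obtain ⟨hmem, hinv, hne⟩ := hσ
  have key : ∀ x ∈ ({x1, x2, x3, x4, x5, x6} : Finset Pt), ∀ y, σ x = y → σ y = x := by
    intro x hx y h
    rw [← h]
    exact hinv x hx
  have hsum : ∑ x ∈ ({x1, x2, x3, x4, x5, x6} : Finset Pt), dist x (σ x) =
      dist x1 (σ x1) + (dist x2 (σ x2) + (dist x3 (σ x3) + (dist x4 (σ x4) +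
        (dist x5 (σ x5) + dist x6 (σ x6))))) := by
    rw [Finset.sum_insert (by simp [n12, n13, n14, n15, n16]),
        Finset.sum_insert (by simp [n23, n24, n25, n26]),
        Finset.sum_insert (by simp [n34, n35, n36]),
        Finset.sum_insert (by simp [n45, n46]),
        Finset.sum_insert (by simp [n56]), Finset.sum_singleton]
  rw [hsum]
  have c1 := hmem x1 (by simp)
  simp only [Finset.mem_insert, Finset.mem_singleton] at c1
  rcases c1 with g1|g1|g1|g1|g1|g1
  · exact absurd g1 (hne x1 (by simp))
  · have f12 : σ x2 = x1 := key x1 (by simp) x2 g1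
    have c3 := hmem x3 (by simp)
    simp only [Finset.mem_insert, Finset.mem_singleton] at c3
    rcases c3 with g3|g3|g3|g3|g3|g3
    · exact absurd ((key x3 (by simp) x1 g3).symm.trans g1) (n23.symm)
    · exact absurd ((key x3 (by simp) x2 g3).symm.trans f12) (n13.symm)
    · exact absurd g3 (hne x3 (by simp))
    · have f34 : σ x4 = x3 := key x3 (by simp) x4 g3
      have c5 := hmem x5 (by simp)
      simp only [Finset.mem_insert, Finset.mem_singleton] at c5
      rcases c5 with g5|g5|g5|g5|g5|g5
      · exact absurd ((key x5 (by simp) x1 g5).symm.trans g1) (n25.symm)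
      · exact absurd ((key x5 (by simp) x2 g5).symm.trans f12) (n15.symm)
      · exact absurd ((key x5 (by simp) x3 g5).symm.trans g3) (n45.symm)
      · exact absurd ((key x5 (by simp) x4 g5).symm.trans f34) (n35.symm)
      · exact absurd g5 (hne x5 (by simp))
      · have f56 : σ x6 = x5 := key x5 (by simp) x6 g5
        rw [g1, f12, g3, f34, g5, f56]
        linarith [h1, dist_comm x1 x2, dist_comm x3 x4, dist_comm x5 x6]
    · have f35 : σ x5 = x3 := key x3 (by simp) x5 g3
      have c4 := hmem x4 (by simp)
      simp only [Finset.mem_insert, Finset.mem_singleton] at c4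
      rcases c4 with g4|g4|g4|g4|g4|g4
      · exact absurd ((key x4 (by simp) x1 g4).symm.trans g1) (n24.symm)
      · exact absurd ((key x4 (by simp) x2 g4).symm.trans f12) (n14.symm)
      · exact absurd ((key x4 (by simp) x3 g4).symm.trans g3) (n45)
      · exact absurd g4 (hne x4 (by simp))
      · exact absurd ((key x4 (by simp) x5 g4).symm.trans f35) (n34.symm)
      · have f46 : σ x6 = x4 := key x4 (by simp) x6 g4
        rw [g1, f12, g3, g4, f35, f46]
        linarith [h2, dist_comm x1 x2, dist_comm x3 x5, dist_comm x4 x6]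
    · have f36 : σ x6 = x3 := key x3 (by simp) x6 g3
      have c4 := hmem x4 (by simp)
      simp only [Finset.mem_insert, Finset.mem_singleton] at c4
      rcases c4 with g4|g4|g4|g4|g4|g4
      · exact absurd ((key x4 (by simp) x1 g4).symm.trans g1) (n24.symm)
      · exact absurd ((key x4 (by simp) x2 g4).symm.trans f12) (n14.symm)
      · exact absurd ((key x4 (by simp) x3 g4).symm.trans g3) (n46)
      · exact absurd g4 (hne x4 (by simp))
      · have f45 : σ x5 = x4 := key x4 (by simp) x5 g4
        rw [g1, f12, g3, g4, f45, f36]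
        linarith [h3, dist_comm x1 x2, dist_comm x3 x6, dist_comm x4 x5]
      · exact absurd ((key x4 (by simp) x6 g4).symm.trans f36) (n34.symm)
  · have f13 : σ x3 = x1 := key x1 (by simp) x3 g1
    have c2 := hmem x2 (by simp)
    simp only [Finset.mem_insert, Finset.mem_singleton] at c2
    rcases c2 with g2|g2|g2|g2|g2|g2
    · exact absurd ((key x2 (by simp) x1 g2).symm.trans g1) (n23)
    · exact absurd g2 (hne x2 (by simp))
    · exact absurd ((key x2 (by simp) x3 g2).symm.trans f13) (n12.symm)
    · have f24 : σ x4 = x2 := key x2 (by simp) x4 g2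
      have c5 := hmem x5 (by simp)
      simp only [Finset.mem_insert, Finset.mem_singleton] at c5
      rcases c5 with g5|g5|g5|g5|g5|g5
      · exact absurd ((key x5 (by simp) x1 g5).symm.trans g1) (n35.symm)
      · exact absurd ((key x5 (by simp) x2 g5).symm.trans g2) (n45.symm)
      · exact absurd ((key x5 (by simp) x3 g5).symm.trans f13) (n15.symm)
      · exact absurd ((key x5 (by simp) x4 g5).symm.trans f24) (n25.symm)
      · exact absurd g5 (hne x5 (by simp))
      · have f56 : σ x6 = x5 := key x5 (by simp) x6 g5
        rw [g1, g2, f13, f24, g5, f56]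
        linarith [h4, dist_comm x1 x3, dist_comm x2 x4, dist_comm x5 x6]
    · have f25 : σ x5 = x2 := key x2 (by simp) x5 g2
      have c4 := hmem x4 (by simp)
      simp only [Finset.mem_insert, Finset.mem_singleton] at c4
      rcases c4 with g4|g4|g4|g4|g4|g4
      · exact absurd ((key x4 (by simp) x1 g4).symm.trans g1) (n34.symm)
      · exact absurd ((key x4 (by simp) x2 g4).symm.trans g2) (n45)
      · exact absurd ((key x4 (by simp) x3 g4).symm.trans f13) (n14.symm)
      · exact absurd g4 (hne x4 (by simp))
      · exact absurd ((key x4 (by simp) x5 g4).symm.trans f25) (n24.symm)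
      · have f46 : σ x6 = x4 := key x4 (by simp) x6 g4
        rw [g1, g2, f13, g4, f25, f46]
        linarith [h5, dist_comm x1 x3, dist_comm x2 x5, dist_comm x4 x6]
    · have f26 : σ x6 = x2 := key x2 (by simp) x6 g2
      have c4 := hmem x4 (by simp)
      simp only [Finset.mem_insert, Finset.mem_singleton] at c4
      rcases c4 with g4|g4|g4|g4|g4|g4
      · exact absurd ((key x4 (by simp) x1 g4).symm.trans g1) (n34.symm)
      · exact absurd ((key x4 (by simp) x2 g4).symm.trans g2) (n46)
      · exact absurd ((key x4 (by simp) x3 g4).symm.trans f13) (n14.symm)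
      · exact absurd g4 (hne x4 (by simp))
      · have f45 : σ x5 = x4 := key x4 (by simp) x5 g4
        rw [g1, g2, f13, g4, f45, f26]
        linarith [h6, dist_comm x1 x3, dist_comm x2 x6, dist_comm x4 x5]
      · exact absurd ((key x4 (by simp) x6 g4).symm.trans f26) (n24.symm)
  · have f14 : σ x4 = x1 := key x1 (by simp) x4 g1
    have c2 := hmem x2 (by simp)
    simp only [Finset.mem_insert, Finset.mem_singleton] at c2
    rcases c2 with g2|g2|g2|g2|g2|g2
    · exact absurd ((key x2 (by simp) x1 g2).symm.trans g1) (n24)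
    · exact absurd g2 (hne x2 (by simp))
    · have f23 : σ x3 = x2 := key x2 (by simp) x3 g2
      have c5 := hmem x5 (by simp)
      simp only [Finset.mem_insert, Finset.mem_singleton] at c5
      rcases c5 with g5|g5|g5|g5|g5|g5
      · exact absurd ((key x5 (by simp) x1 g5).symm.trans g1) (n45.symm)
      · exact absurd ((key x5 (by simp) x2 g5).symm.trans g2) (n35.symm)
      · exact absurd ((key x5 (by simp) x3 g5).symm.trans f23) (n25.symm)
      · exact absurd ((key x5 (by simp) x4 g5).symm.trans f14) (n15.symm)
      · exact absurd g5 (hne x5 (by simp))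
      · have f56 : σ x6 = x5 := key x5 (by simp) x6 g5
        rw [g1, g2, f23, f14, g5, f56]
        linarith [h7, dist_comm x1 x4, dist_comm x2 x3, dist_comm x5 x6]
    · exact absurd ((key x2 (by simp) x4 g2).symm.trans f14) (n12.symm)
    · have f25 : σ x5 = x2 := key x2 (by simp) x5 g2
      have c3 := hmem x3 (by simp)
      simp only [Finset.mem_insert, Finset.mem_singleton] at c3
      rcases c3 with g3|g3|g3|g3|g3|g3
      · exact absurd ((key x3 (by simp) x1 g3).symm.trans g1) (n34)
      · exact absurd ((key x3 (by simp) x2 g3).symm.trans g2) (n35)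
      · exact absurd g3 (hne x3 (by simp))
      · exact absurd ((key x3 (by simp) x4 g3).symm.trans f14) (n13.symm)
      · exact absurd ((key x3 (by simp) x5 g3).symm.trans f25) (n23.symm)
      · have f36 : σ x6 = x3 := key x3 (by simp) x6 g3
        rw [g1, g2, g3, f14, f25, f36]
        linarith [h8, dist_comm x1 x4, dist_comm x2 x5, dist_comm x3 x6]
    · have f26 : σ x6 = x2 := key x2 (by simp) x6 g2
      have c3 := hmem x3 (by simp)
      simp only [Finset.mem_insert, Finset.mem_singleton] at c3
      rcases c3 with g3|g3|g3|g3|g3|g3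
      · exact absurd ((key x3 (by simp) x1 g3).symm.trans g1) (n34)
      · exact absurd ((key x3 (by simp) x2 g3).symm.trans g2) (n36)
      · exact absurd g3 (hne x3 (by simp))
      · exact absurd ((key x3 (by simp) x4 g3).symm.trans f14) (n13.symm)
      · have f35 : σ x5 = x3 := key x3 (by simp) x5 g3
        rw [g1, g2, g3, f14, f35, f26]
        linarith [h9, dist_comm x1 x4, dist_comm x2 x6, dist_comm x3 x5]
      · exact absurd ((key x3 (by simp) x6 g3).symm.trans f26) (n23.symm)
  · have f15 : σ x5 = x1 := key x1 (by simp) x5 g1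
    have c2 := hmem x2 (by simp)
    simp only [Finset.mem_insert, Finset.mem_singleton] at c2
    rcases c2 with g2|g2|g2|g2|g2|g2
    · exact absurd ((key x2 (by simp) x1 g2).symm.trans g1) (n25)
    · exact absurd g2 (hne x2 (by simp))
    · have f23 : σ x3 = x2 := key x2 (by simp) x3 g2
      have c4 := hmem x4 (by simp)
      simp only [Finset.mem_insert, Finset.mem_singleton] at c4
      rcases c4 with g4|g4|g4|g4|g4|g4
      · exact absurd ((key x4 (by simp) x1 g4).symm.trans g1) (n45)
      · exact absurd ((key x4 (by simp) x2 g4).symm.trans g2) (n34.symm)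
      · exact absurd ((key x4 (by simp) x3 g4).symm.trans f23) (n24.symm)
      · exact absurd g4 (hne x4 (by simp))
      · exact absurd ((key x4 (by simp) x5 g4).symm.trans f15) (n14.symm)
      · have f46 : σ x6 = x4 := key x4 (by simp) x6 g4
        rw [g1, g2, f23, g4, f15, f46]
        linarith [h10, dist_comm x1 x5, dist_comm x2 x3, dist_comm x4 x6]
    · have f24 : σ x4 = x2 := key x2 (by simp) x4 g2
      have c3 := hmem x3 (by simp)
      simp only [Finset.mem_insert, Finset.mem_singleton] at c3
      rcases c3 with g3|g3|g3|g3|g3|g3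
      · exact absurd ((key x3 (by simp) x1 g3).symm.trans g1) (n35)
      · exact absurd ((key x3 (by simp) x2 g3).symm.trans g2) (n34)
      · exact absurd g3 (hne x3 (by simp))
      · exact absurd ((key x3 (by simp) x4 g3).symm.trans f24) (n23.symm)
      · exact absurd ((key x3 (by simp) x5 g3).symm.trans f15) (n13.symm)
      · have f36 : σ x6 = x3 := key x3 (by simp) x6 g3
        rw [g1, g2, g3, f24, f15, f36]
        linarith [h11, dist_comm x1 x5, dist_comm x2 x4, dist_comm x3 x6]
    · exact absurd ((key x2 (by simp) x5 g2).symm.trans f15) (n12.symm)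
    · have f26 : σ x6 = x2 := key x2 (by simp) x6 g2
      have c3 := hmem x3 (by simp)
      simp only [Finset.mem_insert, Finset.mem_singleton] at c3
      rcases c3 with g3|g3|g3|g3|g3|g3
      · exact absurd ((key x3 (by simp) x1 g3).symm.trans g1) (n35)
      · exact absurd ((key x3 (by simp) x2 g3).symm.trans g2) (n36)
      · exact absurd g3 (hne x3 (by simp))
      · have f34 : σ x4 = x3 := key x3 (by simp) x4 g3
        rw [g1, g2, g3, f34, f15, f26]
        linarith [h12, dist_comm x1 x5, dist_comm x2 x6, dist_comm x3 x4]
      · exact absurd ((key x3 (by simp) x5 g3).symm.trans f15) (n13.symm)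
      · exact absurd ((key x3 (by simp) x6 g3).symm.trans f26) (n23.symm)
  · have f16 : σ x6 = x1 := key x1 (by simp) x6 g1
    have c2 := hmem x2 (by simp)
    simp only [Finset.mem_insert, Finset.mem_singleton] at c2
    rcases c2 with g2|g2|g2|g2|g2|g2
    · exact absurd ((key x2 (by simp) x1 g2).symm.trans g1) (n26)
    · exact absurd g2 (hne x2 (by simp))
    · have f23 : σ x3 = x2 := key x2 (by simp) x3 g2
      have c4 := hmem x4 (by simp)
      simp only [Finset.mem_insert, Finset.mem_singleton] at c4
      rcases c4 with g4|g4|g4|g4|g4|g4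
      · exact absurd ((key x4 (by simp) x1 g4).symm.trans g1) (n46)
      · exact absurd ((key x4 (by simp) x2 g4).symm.trans g2) (n34.symm)
      · exact absurd ((key x4 (by simp) x3 g4).symm.trans f23) (n24.symm)
      · exact absurd g4 (hne x4 (by simp))
      · have f45 : σ x5 = x4 := key x4 (by simp) x5 g4
        rw [g1, g2, f23, g4, f45, f16]
        linarith [h13, dist_comm x1 x6, dist_comm x2 x3, dist_comm x4 x5]
      · exact absurd ((key x4 (by simp) x6 g4).symm.trans f16) (n14.symm)
    · have f24 : σ x4 = x2 := key x2 (by simp) x4 g2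
      have c3 := hmem x3 (by simp)
      simp only [Finset.mem_insert, Finset.mem_singleton] at c3
      rcases c3 with g3|g3|g3|g3|g3|g3
      · exact absurd ((key x3 (by simp) x1 g3).symm.trans g1) (n36)
      · exact absurd ((key x3 (by simp) x2 g3).symm.trans g2) (n34)
      · exact absurd g3 (hne x3 (by simp))
      · exact absurd ((key x3 (by simp) x4 g3).symm.trans f24) (n23.symm)
      · have f35 : σ x5 = x3 := key x3 (by simp) x5 g3
        rw [g1, g2, g3, f24, f35, f16]
        linarith [h14, dist_comm x1 x6, dist_comm x2 x4, dist_comm x3 x5]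
      · exact absurd ((key x3 (by simp) x6 g3).symm.trans f16) (n13.symm)
    · have f25 : σ x5 = x2 := key x2 (by simp) x5 g2
      have c3 := hmem x3 (by simp)
      simp only [Finset.mem_insert, Finset.mem_singleton] at c3
      rcases c3 with g3|g3|g3|g3|g3|g3
      · exact absurd ((key x3 (by simp) x1 g3).symm.trans g1) (n36)
      · exact absurd ((key x3 (by simp) x2 g3).symm.trans g2) (n35)
      · exact absurd g3 (hne x3 (by simp))
      · have f34 : σ x4 = x3 := key x3 (by simp) x4 g3
        rw [g1, g2, g3, f34, f25, f16]
        linarith [h15, dist_comm x1 x6, dist_comm x2 x5, dist_comm x3 x4]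
      · exact absurd ((key x3 (by simp) x5 g3).symm.trans f25) (n23.symm)
      · exact absurd ((key x3 (by simp) x6 g3).symm.trans f16) (n13.symm)
    · exact absurd ((key x2 (by simp) x6 g2).symm.trans f16) (n12.symm)

noncomputable def pA : Pt := !₂[22, -55]
noncomputable def pB : Pt := !₂[-14, 115]
noncomputable def pC : Pt := !₂[44, -82]
noncomputable def pD : Pt := !₂[-34, 26]
noncomputable def pE : Pt := !₂[117, -36]
noncomputable def pF : Pt := !₂[-108, -261]
noncomputable def pG : Pt := !₂[32, -26]
noncomputable def pH : Pt := !₂[206, -10]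

lemma dAB_ub : dist pA pB ≤ 173.77 := by
  apply dist_le_of _ _ _ (by norm_num)
  simp only [pA, pB, Matrix.cons_val_zero, Matrix.cons_val_one, Matrix.head_cons]
  norm_num
lemma dAB_lb : (173.76:ℝ) ≤ dist pA pB := by
  apply le_dist_of _ _ _ (by norm_num)
  simp only [pA, pB, Matrix.cons_val_zero, Matrix.cons_val_one, Matrix.head_cons]
  norm_num
lemma dAC_ub : dist pA pC ≤ 34.83 := by
  apply dist_le_of _ _ _ (by norm_num)
  simp only [pA, pC, Matrix.cons_val_zero, Matrix.cons_val_one, Matrix.head_cons]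
  norm_num
lemma dAC_lb : (34.82:ℝ) ≤ dist pA pC := by
  apply le_dist_of _ _ _ (by norm_num)
  simp only [pA, pC, Matrix.cons_val_zero, Matrix.cons_val_one, Matrix.head_cons]
  norm_num
lemma dAD_ub : dist pA pD ≤ 98.48 := by
  apply dist_le_of _ _ _ (by norm_num)
  simp only [pA, pD, Matrix.cons_val_zero, Matrix.cons_val_one, Matrix.head_cons]
  norm_num
lemma dAD_lb : (98.47:ℝ) ≤ dist pA pD := by
  apply le_dist_of _ _ _ (by norm_num)
  simp only [pA, pD, Matrix.cons_val_zero, Matrix.cons_val_one, Matrix.head_cons]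
  norm_num
lemma dAE_ub : dist pA pE ≤ 96.89 := by
  apply dist_le_of _ _ _ (by norm_num)
  simp only [pA, pE, Matrix.cons_val_zero, Matrix.cons_val_one, Matrix.head_cons]
  norm_num
lemma dAE_lb : (96.88:ℝ) ≤ dist pA pE := by
  apply le_dist_of _ _ _ (by norm_num)
  simp only [pA, pE, Matrix.cons_val_zero, Matrix.cons_val_one, Matrix.head_cons]
  norm_num
lemma dAF_ub : dist pA pF ≤ 243.59 := by
  apply dist_le_of _ _ _ (by norm_num)
  simp only [pA, pF, Matrix.cons_val_zero, Matrix.cons_val_one, Matrix.head_cons]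
  norm_num
lemma dAF_lb : (243.58:ℝ) ≤ dist pA pF := by
  apply le_dist_of _ _ _ (by norm_num)
  simp only [pA, pF, Matrix.cons_val_zero, Matrix.cons_val_one, Matrix.head_cons]
  norm_num
lemma dAG_ub : dist pA pG ≤ 30.68 := by
  apply dist_le_of _ _ _ (by norm_num)
  simp only [pA, pG, Matrix.cons_val_zero, Matrix.cons_val_one, Matrix.head_cons]
  norm_num
lemma dAG_lb : (30.67:ℝ) ≤ dist pA pG := by
  apply le_dist_of _ _ _ (by norm_num)
  simp only [pA, pG, Matrix.cons_val_zero, Matrix.cons_val_one, Matrix.head_cons]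
  norm_num
lemma dAH_ub : dist pA pH ≤ 189.43 := by
  apply dist_le_of _ _ _ (by norm_num)
  simp only [pA, pH, Matrix.cons_val_zero, Matrix.cons_val_one, Matrix.head_cons]
  norm_num
lemma dAH_lb : (189.42:ℝ) ≤ dist pA pH := by
  apply le_dist_of _ _ _ (by norm_num)
  simp only [pA, pH, Matrix.cons_val_zero, Matrix.cons_val_one, Matrix.head_cons]
  norm_num
lemma dBC_ub : dist pB pC ≤ 205.37 := by
  apply dist_le_of _ _ _ (by norm_num)
  simp only [pB, pC, Matrix.cons_val_zero, Matrix.cons_val_one, Matrix.head_cons]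
  norm_num
lemma dBC_lb : (205.36:ℝ) ≤ dist pB pC := by
  apply le_dist_of _ _ _ (by norm_num)
  simp only [pB, pC, Matrix.cons_val_zero, Matrix.cons_val_one, Matrix.head_cons]
  norm_num
lemma dBD_ub : dist pB pD ≤ 91.22 := by
  apply dist_le_of _ _ _ (by norm_num)
  simp only [pB, pD, Matrix.cons_val_zero, Matrix.cons_val_one, Matrix.head_cons]
  norm_num
lemma dBD_lb : (91.21:ℝ) ≤ dist pB pD := by
  apply le_dist_of _ _ _ (by norm_num)
  simp only [pB, pD, Matrix.cons_val_zero, Matrix.cons_val_one, Matrix.head_cons]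
  norm_num
lemma dBE_ub : dist pB pE ≤ 199.91 := by
  apply dist_le_of _ _ _ (by norm_num)
  simp only [pB, pE, Matrix.cons_val_zero, Matrix.cons_val_one, Matrix.head_cons]
  norm_num
lemma dBE_lb : (199.90:ℝ) ≤ dist pB pE := by
  apply le_dist_of _ _ _ (by norm_num)
  simp only [pB, pE, Matrix.cons_val_zero, Matrix.cons_val_one, Matrix.head_cons]
  norm_num
lemma dBF_ub : dist pB pF ≤ 387.58 := by
  apply dist_le_of _ _ _ (by norm_num)
  simp only [pB, pF, Matrix.cons_val_zero, Matrix.cons_val_one, Matrix.head_cons]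
  norm_num
lemma dBF_lb : (387.57:ℝ) ≤ dist pB pF := by
  apply le_dist_of _ _ _ (by norm_num)
  simp only [pB, pF, Matrix.cons_val_zero, Matrix.cons_val_one, Matrix.head_cons]
  norm_num
lemma dBG_ub : dist pB pG ≤ 148.32 := by
  apply dist_le_of _ _ _ (by norm_num)
  simp only [pB, pG, Matrix.cons_val_zero, Matrix.cons_val_one, Matrix.head_cons]
  norm_num
lemma dBG_lb : (148.31:ℝ) ≤ dist pB pG := by
  apply le_dist_of _ _ _ (by norm_num)
  simp only [pB, pG, Matrix.cons_val_zero, Matrix.cons_val_one, Matrix.head_cons]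
  norm_num
lemma dBH_ub : dist pB pH ≤ 253.04 := by
  apply dist_le_of _ _ _ (by norm_num)
  simp only [pB, pH, Matrix.cons_val_zero, Matrix.cons_val_one, Matrix.head_cons]
  norm_num
lemma dBH_lb : (253.03:ℝ) ≤ dist pB pH := by
  apply le_dist_of _ _ _ (by norm_num)
  simp only [pB, pH, Matrix.cons_val_zero, Matrix.cons_val_one, Matrix.head_cons]
  norm_num
lemma dCD_ub : dist pC pD ≤ 133.23 := by
  apply dist_le_of _ _ _ (by norm_num)
  simp only [pC, pD, Matrix.cons_val_zero, Matrix.cons_val_one, Matrix.head_cons]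
  norm_num
lemma dCD_lb : (133.22:ℝ) ≤ dist pC pD := by
  apply le_dist_of _ _ _ (by norm_num)
  simp only [pC, pD, Matrix.cons_val_zero, Matrix.cons_val_one, Matrix.head_cons]
  norm_num
lemma dCE_ub : dist pC pE ≤ 86.29 := by
  apply dist_le_of _ _ _ (by norm_num)
  simp only [pC, pE, Matrix.cons_val_zero, Matrix.cons_val_one, Matrix.head_cons]
  norm_num
lemma dCE_lb : (86.28:ℝ) ≤ dist pC pE := by
  apply le_dist_of _ _ _ (by norm_num)
  simp only [pC, pE, Matrix.cons_val_zero, Matrix.cons_val_one, Matrix.head_cons]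
  norm_num
lemma dCF_ub : dist pC pF ≤ 234.83 := by
  apply dist_le_of _ _ _ (by norm_num)
  simp only [pC, pF, Matrix.cons_val_zero, Matrix.cons_val_one, Matrix.head_cons]
  norm_num
lemma dCF_lb : (234.82:ℝ) ≤ dist pC pF := by
  apply le_dist_of _ _ _ (by norm_num)
  simp only [pC, pF, Matrix.cons_val_zero, Matrix.cons_val_one, Matrix.head_cons]
  norm_num
lemma dCG_ub : dist pC pG ≤ 57.28 := by
  apply dist_le_of _ _ _ (by norm_num)
  simp only [pC, pG, Matrix.cons_val_zero, Matrix.cons_val_one, Matrix.head_cons]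
  norm_num
lemma dCG_lb : (57.27:ℝ) ≤ dist pC pG := by
  apply le_dist_of _ _ _ (by norm_num)
  simp only [pC, pG, Matrix.cons_val_zero, Matrix.cons_val_one, Matrix.head_cons]
  norm_num
lemma dCH_ub : dist pC pH ≤ 177.28 := by
  apply dist_le_of _ _ _ (by norm_num)
  simp only [pC, pH, Matrix.cons_val_zero, Matrix.cons_val_one, Matrix.head_cons]
  norm_num
lemma dCH_lb : (177.27:ℝ) ≤ dist pC pH := by
  apply le_dist_of _ _ _ (by norm_num)
  simp only [pC, pH, Matrix.cons_val_zero, Matrix.cons_val_one, Matrix.head_cons]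
  norm_num
lemma dDE_ub : dist pD pE ≤ 163.24 := by
  apply dist_le_of _ _ _ (by norm_num)
  simp only [pD, pE, Matrix.cons_val_zero, Matrix.cons_val_one, Matrix.head_cons]
  norm_num
lemma dDE_lb : (163.23:ℝ) ≤ dist pD pE := by
  apply le_dist_of _ _ _ (by norm_num)
  simp only [pD, pE, Matrix.cons_val_zero, Matrix.cons_val_one, Matrix.head_cons]
  norm_num
lemma dDF_ub : dist pD pF ≤ 296.39 := by
  apply dist_le_of _ _ _ (by norm_num)
  simp only [pD, pF, Matrix.cons_val_zero, Matrix.cons_val_one, Matrix.head_cons]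
  norm_num
lemma dDF_lb : (296.38:ℝ) ≤ dist pD pF := by
  apply le_dist_of _ _ _ (by norm_num)
  simp only [pD, pF, Matrix.cons_val_zero, Matrix.cons_val_one, Matrix.head_cons]
  norm_num
lemma dDG_ub : dist pD pG ≤ 84.03 := by
  apply dist_le_of _ _ _ (by norm_num)
  simp only [pD, pG, Matrix.cons_val_zero, Matrix.cons_val_one, Matrix.head_cons]
  norm_num
lemma dDG_lb : (84.02:ℝ) ≤ dist pD pG := by
  apply le_dist_of _ _ _ (by norm_num)
  simp only [pD, pG, Matrix.cons_val_zero, Matrix.cons_val_one, Matrix.head_cons]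
  norm_num
lemma dDH_ub : dist pD pH ≤ 242.69 := by
  apply dist_le_of _ _ _ (by norm_num)
  simp only [pD, pH, Matrix.cons_val_zero, Matrix.cons_val_one, Matrix.head_cons]
  norm_num
lemma dDH_lb : (242.68:ℝ) ≤ dist pD pH := by
  apply le_dist_of _ _ _ (by norm_num)
  simp only [pD, pH, Matrix.cons_val_zero, Matrix.cons_val_one, Matrix.head_cons]
  norm_num
lemma dEF_ub : dist pE pF ≤ 318.20 := by
  apply dist_le_of _ _ _ (by norm_num)
  simp only [pE, pF, Matrix.cons_val_zero, Matrix.cons_val_one, Matrix.head_cons]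
  norm_num
lemma dEF_lb : (318.19:ℝ) ≤ dist pE pF := by
  apply le_dist_of _ _ _ (by norm_num)
  simp only [pE, pF, Matrix.cons_val_zero, Matrix.cons_val_one, Matrix.head_cons]
  norm_num
lemma dEG_ub : dist pE pG ≤ 85.59 := by
  apply dist_le_of _ _ _ (by norm_num)
  simp only [pE, pG, Matrix.cons_val_zero, Matrix.cons_val_one, Matrix.head_cons]
  norm_num
lemma dEG_lb : (85.58:ℝ) ≤ dist pE pG := by
  apply le_dist_of _ _ _ (by norm_num)
  simp only [pE, pG, Matrix.cons_val_zero, Matrix.cons_val_one, Matrix.head_cons]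
  norm_num
lemma dEH_ub : dist pE pH ≤ 92.73 := by
  apply dist_le_of _ _ _ (by norm_num)
  simp only [pE, pH, Matrix.cons_val_zero, Matrix.cons_val_one, Matrix.head_cons]
  norm_num
lemma dEH_lb : (92.72:ℝ) ≤ dist pE pH := by
  apply le_dist_of _ _ _ (by norm_num)
  simp only [pE, pH, Matrix.cons_val_zero, Matrix.cons_val_one, Matrix.head_cons]
  norm_num
lemma dFG_ub : dist pF pG ≤ 273.55 := by
  apply dist_le_of _ _ _ (by norm_num)
  simp only [pF, pG, Matrix.cons_val_zero, Matrix.cons_val_one, Matrix.head_cons]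
  norm_num
lemma dFG_lb : (273.54:ℝ) ≤ dist pF pG := by
  apply le_dist_of _ _ _ (by norm_num)
  simp only [pF, pG, Matrix.cons_val_zero, Matrix.cons_val_one, Matrix.head_cons]
  norm_num
lemma dFH_ub : dist pF pH ≤ 402.00 := by
  apply dist_le_of _ _ _ (by norm_num)
  simp only [pF, pH, Matrix.cons_val_zero, Matrix.cons_val_one, Matrix.head_cons]
  norm_num
lemma dFH_lb : (401.99:ℝ) ≤ dist pF pH := by
  apply le_dist_of _ _ _ (by norm_num)
  simp only [pF, pH, Matrix.cons_val_zero, Matrix.cons_val_one, Matrix.head_cons]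
  norm_num
lemma dGH_ub : dist pG pH ≤ 174.74 := by
  apply dist_le_of _ _ _ (by norm_num)
  simp only [pG, pH, Matrix.cons_val_zero, Matrix.cons_val_one, Matrix.head_cons]
  norm_num
lemma dGH_lb : (174.73:ℝ) ≤ dist pG pH := by
  apply le_dist_of _ _ _ (by norm_num)
  simp only [pG, pH, Matrix.cons_val_zero, Matrix.cons_val_one, Matrix.head_cons]
  norm_num
lemma neAB : pA ≠ pB := ne_of_dist_lb (by norm_num) dAB_lb
lemma neAC : pA ≠ pC := ne_of_dist_lb (by norm_num) dAC_lb
lemma neAD : pA ≠ pD := ne_of_dist_lb (by norm_num) dAD_lb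
lemma neAE : pA ≠ pE := ne_of_dist_lb (by norm_num) dAE_lb
lemma neAF : pA ≠ pF := ne_of_dist_lb (by norm_num) dAF_lb
lemma neAG : pA ≠ pG := ne_of_dist_lb (by norm_num) dAG_lb
lemma neAH : pA ≠ pH := ne_of_dist_lb (by norm_num) dAH_lb
lemma neBC : pB ≠ pC := ne_of_dist_lb (by norm_num) dBC_lb
lemma neBD : pB ≠ pD := ne_of_dist_lb (by norm_num) dBD_lb
lemma neBE : pB ≠ pE := ne_of_dist_lb (by norm_num) dBE_lb
lemma neBF : pB ≠ pF := ne_of_dist_lb (by norm_num) dBF_lb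
lemma neBG : pB ≠ pG := ne_of_dist_lb (by norm_num) dBG_lb
lemma neBH : pB ≠ pH := ne_of_dist_lb (by norm_num) dBH_lb
lemma neCD : pC ≠ pD := ne_of_dist_lb (by norm_num) dCD_lb
lemma neCE : pC ≠ pE := ne_of_dist_lb (by norm_num) dCE_lb
lemma neCF : pC ≠ pF := ne_of_dist_lb (by norm_num) dCF_lb
lemma neCG : pC ≠ pG := ne_of_dist_lb (by norm_num) dCG_lb
lemma neCH : pC ≠ pH := ne_of_dist_lb (by norm_num) dCH_lb
lemma neDE : pD ≠ pE := ne_of_dist_lb (by norm_num) dDE_lb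
lemma neDF : pD ≠ pF := ne_of_dist_lb (by norm_num) dDF_lb
lemma neDG : pD ≠ pG := ne_of_dist_lb (by norm_num) dDG_lb
lemma neDH : pD ≠ pH := ne_of_dist_lb (by norm_num) dDH_lb
lemma neEF : pE ≠ pF := ne_of_dist_lb (by norm_num) dEF_lb
lemma neEG : pE ≠ pG := ne_of_dist_lb (by norm_num) dEG_lb
lemma neEH : pE ≠ pH := ne_of_dist_lb (by norm_num) dEH_lb
lemma neFG : pF ≠ pG := ne_of_dist_lb (by norm_num) dFG_lb
lemma neFH : pF ≠ pH := ne_of_dist_lb (by norm_num) dFH_lb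
lemma neGH : pG ≠ pH := ne_of_dist_lb (by norm_num) dGH_lb

lemma close012 (S : Finset Pt) (hS : S = ({pA, pB, pC, pD, pE, pF} : Finset Pt)) (σ : Pt → Pt)
    (hσ : IsFpfInvolOn S σ) (W : ℝ) (hW : dist pA pB + dist pC pD + dist pE pF ≤ W) :
    (1/2) * ∑ x ∈ S, dist x (σ x) ≤ W := by
  subst hS
  apply matching6 _ _ _ _ _ _ W
  · exact neAB
  · exact neAC
  · exact neAD
  · exact neAE
  · exact neAF
  · exact neBC
  · exact neBD
  · exact neBE
  · exact neBF
  · exact neCD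
  · exact neCE
  · exact neCF
  · exact neDE
  · exact neDF
  · exact neEF
  · linarith [hW]
  · linarith [hW, dAB_ub, dCE_ub, dDF_ub, dAB_lb, dCD_lb, dEF_lb]
  · linarith [hW, dAB_ub, dCF_ub, dDE_ub, dAB_lb, dCD_lb, dEF_lb]
  · linarith [hW, dAC_ub, dBD_ub, dEF_ub, dAB_lb, dCD_lb, dEF_lb]
  · linarith [hW, dAC_ub, dBE_ub, dDF_ub, dAB_lb, dCD_lb, dEF_lb]
  · linarith [hW, dAC_ub, dBF_ub, dDE_ub, dAB_lb, dCD_lb, dEF_lb]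
  · linarith [hW, dAD_ub, dBC_ub, dEF_ub, dAB_lb, dCD_lb, dEF_lb]
  · linarith [hW, dAD_ub, dBE_ub, dCF_ub, dAB_lb, dCD_lb, dEF_lb]
  · linarith [hW, dAD_ub, dBF_ub, dCE_ub, dAB_lb, dCD_lb, dEF_lb]
  · linarith [hW, dAE_ub, dBC_ub, dDF_ub, dAB_lb, dCD_lb, dEF_lb]
  · linarith [hW, dAE_ub, dBD_ub, dCF_ub, dAB_lb, dCD_lb, dEF_lb]
  · linarith [hW, dAE_ub, dBF_ub, dCD_ub, dAB_lb, dCD_lb, dEF_lb]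
  · linarith [hW, dAF_ub, dBC_ub, dDE_ub, dAB_lb, dCD_lb, dEF_lb]
  · linarith [hW, dAF_ub, dBD_ub, dCE_ub, dAB_lb, dCD_lb, dEF_lb]
  · linarith [hW, dAF_ub, dBE_ub, dCD_ub, dAB_lb, dCD_lb, dEF_lb]
  · exact hσ

lemma close013 (S : Finset Pt) (hS : S = ({pA, pB, pC, pD, pG, pH} : Finset Pt)) (σ : Pt → Pt)
    (hσ : IsFpfInvolOn S σ) (W : ℝ) (hW : dist pA pB + dist pC pD + dist pG pH ≤ W) :
    (1/2) * ∑ x ∈ S, dist x (σ x) ≤ W := by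
  subst hS
  apply matching6 _ _ _ _ _ _ W
  · exact neAB
  · exact neAC
  · exact neAD
  · exact neAG
  · exact neAH
  · exact neBC
  · exact neBD
  · exact neBG
  · exact neBH
  · exact neCD
  · exact neCG
  · exact neCH
  · exact neDG
  · exact neDH
  · exact neGH
  · linarith [hW]
  · linarith [hW, dAB_ub, dCG_ub, dDH_ub, dAB_lb, dCD_lb, dGH_lb]
  · linarith [hW, dAB_ub, dCH_ub, dDG_ub, dAB_lb, dCD_lb, dGH_lb]
  · linarith [hW, dAC_ub, dBD_ub, dGH_ub, dAB_lb, dCD_lb, dGH_lb]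
  · linarith [hW, dAC_ub, dBG_ub, dDH_ub, dAB_lb, dCD_lb, dGH_lb]
  · linarith [hW, dAC_ub, dBH_ub, dDG_ub, dAB_lb, dCD_lb, dGH_lb]
  · linarith [hW, dAD_ub, dBC_ub, dGH_ub, dAB_lb, dCD_lb, dGH_lb]
  · linarith [hW, dAD_ub, dBG_ub, dCH_ub, dAB_lb, dCD_lb, dGH_lb]
  · linarith [hW, dAD_ub, dBH_ub, dCG_ub, dAB_lb, dCD_lb, dGH_lb]
  · linarith [hW, dAG_ub, dBC_ub, dDH_ub, dAB_lb, dCD_lb, dGH_lb]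
  · linarith [hW, dAG_ub, dBD_ub, dCH_ub, dAB_lb, dCD_lb, dGH_lb]
  · linarith [hW, dAG_ub, dBH_ub, dCD_ub, dAB_lb, dCD_lb, dGH_lb]
  · linarith [hW, dAH_ub, dBC_ub, dDG_ub, dAB_lb, dCD_lb, dGH_lb]
  · linarith [hW, dAH_ub, dBD_ub, dCG_ub, dAB_lb, dCD_lb, dGH_lb]
  · linarith [hW, dAH_ub, dBG_ub, dCD_ub, dAB_lb, dCD_lb, dGH_lb]
  · exact hσ

lemma close023 (S : Finset Pt) (hS : S = ({pA, pB, pE, pF, pG, pH} : Finset Pt)) (σ : Pt → Pt)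
    (hσ : IsFpfInvolOn S σ) (W : ℝ) (hW : dist pA pB + dist pE pF + dist pG pH ≤ W) :
    (1/2) * ∑ x ∈ S, dist x (σ x) ≤ W := by
  subst hS
  apply matching6 _ _ _ _ _ _ W
  · exact neAB
  · exact neAE
  · exact neAF
  · exact neAG
  · exact neAH
  · exact neBE
  · exact neBF
  · exact neBG
  · exact neBH
  · exact neEF
  · exact neEG
  · exact neEH
  · exact neFG
  · exact neFH
  · exact neGH
  · linarith [hW]
  · linarith [hW, dAB_ub, dEG_ub, dFH_ub, dAB_lb, dEF_lb, dGH_lb]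
  · linarith [hW, dAB_ub, dEH_ub, dFG_ub, dAB_lb, dEF_lb, dGH_lb]
  · linarith [hW, dAE_ub, dBF_ub, dGH_ub, dAB_lb, dEF_lb, dGH_lb]
  · linarith [hW, dAE_ub, dBG_ub, dFH_ub, dAB_lb, dEF_lb, dGH_lb]
  · linarith [hW, dAE_ub, dBH_ub, dFG_ub, dAB_lb, dEF_lb, dGH_lb]
  · linarith [hW, dAF_ub, dBE_ub, dGH_ub, dAB_lb, dEF_lb, dGH_lb]
  · linarith [hW, dAF_ub, dBG_ub, dEH_ub, dAB_lb, dEF_lb, dGH_lb]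
  · linarith [hW, dAF_ub, dBH_ub, dEG_ub, dAB_lb, dEF_lb, dGH_lb]
  · linarith [hW, dAG_ub, dBE_ub, dFH_ub, dAB_lb, dEF_lb, dGH_lb]
  · linarith [hW, dAG_ub, dBF_ub, dEH_ub, dAB_lb, dEF_lb, dGH_lb]
  · linarith [hW, dAG_ub, dBH_ub, dEF_ub, dAB_lb, dEF_lb, dGH_lb]
  · linarith [hW, dAH_ub, dBE_ub, dFG_ub, dAB_lb, dEF_lb, dGH_lb]
  · linarith [hW, dAH_ub, dBF_ub, dEG_ub, dAB_lb, dEF_lb, dGH_lb]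
  · linarith [hW, dAH_ub, dBG_ub, dEF_ub, dAB_lb, dEF_lb, dGH_lb]
  · exact hσ

lemma close123 (S : Finset Pt) (hS : S = ({pC, pD, pE, pF, pG, pH} : Finset Pt)) (σ : Pt → Pt)
    (hσ : IsFpfInvolOn S σ) (W : ℝ) (hW : dist pC pD + dist pE pF + dist pG pH ≤ W) :
    (1/2) * ∑ x ∈ S, dist x (σ x) ≤ W := by
  subst hS
  apply matching6 _ _ _ _ _ _ W
  · exact neCD
  · exact neCE
  · exact neCF
  · exact neCG
  · exact neCH
  · exact neDE
  · exact neDF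
  · exact neDG
  · exact neDH
  · exact neEF
  · exact neEG
  · exact neEH
  · exact neFG
  · exact neFH
  · exact neGH
  · linarith [hW]
  · linarith [hW, dCD_ub, dEG_ub, dFH_ub, dCD_lb, dEF_lb, dGH_lb]
  · linarith [hW, dCD_ub, dEH_ub, dFG_ub, dCD_lb, dEF_lb, dGH_lb]
  · linarith [hW, dCE_ub, dDF_ub, dGH_ub, dCD_lb, dEF_lb, dGH_lb]
  · linarith [hW, dCE_ub, dDG_ub, dFH_ub, dCD_lb, dEF_lb, dGH_lb]
  · linarith [hW, dCE_ub, dDH_ub, dFG_ub, dCD_lb, dEF_lb, dGH_lb]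
  · linarith [hW, dCF_ub, dDE_ub, dGH_ub, dCD_lb, dEF_lb, dGH_lb]
  · linarith [hW, dCF_ub, dDG_ub, dEH_ub, dCD_lb, dEF_lb, dGH_lb]
  · linarith [hW, dCF_ub, dDH_ub, dEG_ub, dCD_lb, dEF_lb, dGH_lb]
  · linarith [hW, dCG_ub, dDE_ub, dFH_ub, dCD_lb, dEF_lb, dGH_lb]
  · linarith [hW, dCG_ub, dDF_ub, dEH_ub, dCD_lb, dEF_lb, dGH_lb]
  · linarith [hW, dCG_ub, dDH_ub, dEF_ub, dCD_lb, dEF_lb, dGH_lb]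
  · linarith [hW, dCH_ub, dDE_ub, dFG_ub, dCD_lb, dEF_lb, dGH_lb]
  · linarith [hW, dCH_ub, dDF_ub, dEG_ub, dCD_lb, dEF_lb, dGH_lb]
  · linarith [hW, dCH_ub, dDG_ub, dEF_ub, dCD_lb, dEF_lb, dGH_lb]
  · exact hσ

set_option maxHeartbeats 4000000 in
theorem mu3_upper_bound : ∃ A B C D E F G H : Pt,
    ([A, B, C, D, E, F, G, H] : List Pt).Pairwise (· ≠ ·) ∧
    -- M₁ = {(A,B), (C,D), (E,F), (G,H)} is 3-local maximum:
    IsKLocalMax 3 ![A, C, E, G] ![B, D, F, H] ∧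
    -- but M₂ = {(A,H), (B,C), (D,E), (F,G)} is much longer:
    dist A B + dist C D + dist E F + dist G H
      < 0.98 * (dist A H + dist B C + dist D E + dist F G) := by
  refine ⟨pA, pB, pC, pD, pE, pF, pG, pH, ?_, ?_, ?_⟩
  · simp [List.pairwise_cons, neAB, neAC, neAD, neAE, neAF, neAG, neAH, neBC, neBD, neBE, neBF, neBG, neBH, neCD, neCE, neCF, neCG, neCH, neDE, neDF, neDG, neDH, neEF, neEG, neEH, neFG, neFH, neGH]
  · intro s hs σ hσ
    rw [Fin.sum_univ_three]
    rw [endpts3] at hσ ⊢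
    rcases fin4cases (s 0) with h0|h0|h0|h0 <;>
      rcases fin4cases (s 1) with h1|h1|h1|h1 <;>
        rcases fin4cases (s 2) with h2|h2|h2|h2 <;>
          first
          | exact absurd (hs (h0.trans h1.symm)) (by decide)
          | exact absurd (hs (h0.trans h2.symm)) (by decide)
          | exact absurd (hs (h1.trans h2.symm)) (by decide)
          | (simp only [h0, h1, h2, Function.comp_apply, Matrix.cons_val_zero,
              Matrix.cons_val_one, Matrix.head_cons, Matrix.cons_val_two,
              Matrix.tail_cons, Matrix.cons_val_three] at hσ ⊢
             first
             | exact close012 _ (by ext x; simp; tauto) σ hσ _ (by linarith)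
             | exact close013 _ (by ext x; simp; tauto) σ hσ _ (by linarith)
             | exact close023 _ (by ext x; simp; tauto) σ hσ _ (by linarith)
             | exact close123 _ (by ext x; simp; tauto) σ hσ _ (by linarith))
  · linarith [dAB_ub, dCD_ub, dEF_ub, dGH_ub, dAH_lb, dBC_lb, dDE_lb, dFG_lb]
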